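/- For all μ, p ∈ [0,1] and n ≥ 1, the expected fraction of infected vertices over the class of 1-half-regular balanced bipartite graphs on 2n vertices, in the (μ,p) infection model, is minimized either by the perfect matching or by an n-star together with n-1 isolated vertices in L. -/

import Mathlib

noncomputable def Lprob (μ p : ℝ) (j : ℕ) : ℝ := 1 - (1 - μ) * (1 - μ * p) ^ j

noncomputable def Rprob (μ p : ℝ) (j : ℕ) : ℝ :=
  μ + p - μ * p - (1 - μ) ^ 2 * p * (1 - μ * p) ^ (j - 1)

/-- Expected infected fraction of a 1-half-regular balanced bipartite graph on
`2n` vertices whose stars (centered in `L`) have sizes given by the list `ks`: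
the star centers and leaves contribute `L_k + k·R_k` each, and the
`n - ks.length` unused `L`-vertices are isolated, contributing `L_0`. -/
noncomputable def infectedFraction (μ p : ℝ) (n : ℕ) (ks : List ℕ) : ℝ :=
  ((ks.map (fun k => Lprob μ p k + (k : ℝ) * Rprob μ p k)).sum
    + ((n : ℝ) - ks.length) * Lprob μ p 0) / (2 * n)



noncomputable def psi (q c : ℝ) (k : ℕ) : ℝ := (1 - q ^ k) / k - c * q ^ (k - 1)

lemma bern (q : ℝ) (hq : 0 ≤ q) (j : ℕ) :
    0 ≤ ((j : ℝ) + 1) - ((j : ℝ) + 2) * q + q ^ (j + 2) := by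
  have h := one_add_mul_le_pow (a := q - 1) (by linarith) (j + 2)
  have e : (1 + (q - 1)) = q := by ring
  rw [e] at h
  push_cast at h
  linarith

lemma Kineq (q : ℝ) (hq0 : 0 ≤ q) (hq1 : q ≤ 1) (j : ℕ) :
    0 ≤ (j : ℝ) - ((j : ℝ) + 2) * q + ((j : ℝ) + 2) * q ^ (j + 1) - (j : ℝ) * q ^ (j + 2) := by
  induction j with
  | zero => norm_num [pow_succ]
  | succ j ih =>
    have hb := bern q hq0 j
    have e1 : q ^ (j + 1) = q ^ j * q := by ring
    have e2 : q ^ (j + 2) = q ^ j * q ^ 2 := by ring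
    have e3 : q ^ (j + 1 + 1) = q ^ j * q ^ 2 := by ring
    have e4 : q ^ (j + 1 + 2) = q ^ j * q ^ 3 := by ring
    push_cast
    rw [e3, e4]
    rw [e1, e2] at ih; rw [e2] at hb
    nlinarith [mul_nonneg hq0 ih, mul_nonneg (show (0:ℝ) ≤ 1 - q by linarith) hb]

lemma psi_succ_sub' (q c : ℝ) (i : ℕ) :
    (((i:ℝ)+1)*((i:ℝ)+2)) * (psi q c (i+1) - psi q c (i+2))
      = (1 - ((i:ℝ)+2) * q^(i+1) + ((i:ℝ)+1) * q^(i+2))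
        - (((i:ℝ)+1)*((i:ℝ)+2)) * (c * q^i * (1 - q)) := by
  unfold psi
  have h1 : ((i:ℝ)+1) ≠ 0 := by positivity
  have h2 : ((i:ℝ)+2) ≠ 0 := by positivity
  simp only [show i+1-1 = i from rfl, show i+2-1 = i+1 from rfl]
  push_cast
  field_simp
  ring

lemma psi_mono_step (q c : ℝ) (hq0 : 0 ≤ q) (hq1 : q ≤ 1) (hc : 0 ≤ c) (i : ℕ)
    (h : 0 ≤ psi q c (i+1) - psi q c (i+2)) :
    0 ≤ psi q c (i+2) - psi q c (i+3) := by
  have hE : 0 ≤ (1 - ((i:ℝ)+2) * q^(i+1) + ((i:ℝ)+1) * q^(i+2))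
      - (((i:ℝ)+1)*((i:ℝ)+2)) * (c * q^i * (1 - q)) := by
    rw [← psi_succ_sub']
    exact mul_nonneg (by positivity) h
  have hK := Kineq q hq0 hq1 (i+1)
  have hpos : (0:ℝ) < ((i:ℝ)+2)*((i:ℝ)+3) := by positivity
  have key : 0 ≤ (((i:ℝ)+2)*((i:ℝ)+3)) * (psi q c (i+2) - psi q c (i+3)) := by
    have e := psi_succ_sub' q c (i+1)
    push_cast at e
    rw [show (i:ℕ)+1+1 = i+2 from rfl, show (i:ℕ)+1+2 = i+3 from rfl] at e
    rw [show ((i:ℝ)+1+1) = (i:ℝ)+2 by ring, show ((i:ℝ)+1+2) = (i:ℝ)+3 by ring] at e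
    rw [e]
    -- now a polynomial inequality; normalize powers
    have e1 : q ^ (i + 1) = q ^ i * q := by ring
    have e2 : q ^ (i + 2) = q ^ i * q ^ 2 := by ring
    have e3 : q ^ (i + 3) = q ^ i * q ^ 3 := by ring
    rw [e1, e2, e3]
    rw [e1, e2] at hE
    push_cast at hK
    rw [e2, e3] at hK
    have hJ : (0:ℝ) < (i:ℝ) + 1 := by positivity
    have hq2 : (0:ℝ) ≤ ((i:ℝ)+3) * q := by positivity
    nlinarith [mul_nonneg hq2 hE, hK, mul_nonneg (mul_nonneg hc (pow_nonneg hq0 i)) (mul_nonneg hq0 (by linarith : (0:ℝ) ≤ 1 - q))]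
  nlinarith [key, hpos]

lemma psi_tail (q c : ℝ) {k : ℕ}
    (h : ∀ m, k ≤ m → 0 ≤ psi q c m - psi q c (m+1)) :
    ∀ m, k ≤ m → psi q c m ≤ psi q c k := by
  intro m hm
  induction m, hm using Nat.le_induction with
  | base => exact le_refl _
  | succ m hm ih => have := h m hm; linarith

lemma psi_alt (q c : ℝ) (hq0 : 0 ≤ q) (hq1 : q ≤ 1) (hc : 0 ≤ c) :
    ∀ k, 1 ≤ k →
      (psi q c 1 ≤ psi q c k ∨ ∀ m, k ≤ m → 0 ≤ psi q c m - psi q c (m+1)) := by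
  intro k hk
  induction k, hk using Nat.le_induction with
  | base => exact Or.inl (le_refl _)
  | succ k hk ih =>
    rcases ih with h1 | h2
    · by_cases hd : 0 ≤ psi q c k - psi q c (k+1)
      · right
        have all : ∀ m, k ≤ m → 0 ≤ psi q c m - psi q c (m+1) := by
          intro m hm'
          induction m, hm' using Nat.le_induction with
          | base => exact hd
          | succ m hm'' ih2 =>
            obtain ⟨i, rfl⟩ : ∃ i, m = i+1 := ⟨m-1, by omega⟩
            exact psi_mono_step q c hq0 hq1 hc i ih2
        exact fun m hm => all m (by omega)
      · left
        push_neg at hd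
        linarith
    · exact Or.inr fun m hm => h2 m (by omega)

lemma psi_min_le (q c : ℝ) (hq0 : 0 ≤ q) (hq1 : q ≤ 1) (hc : 0 ≤ c)
    (n k : ℕ) (h1 : 1 ≤ k) (hkn : k ≤ n) :
    min (psi q c 1) (psi q c n) ≤ psi q c k := by
  rcases psi_alt q c hq0 hq1 hc k h1 with h | h
  · exact le_trans (min_le_left _ _) h
  · exact le_trans (min_le_right _ _) (psi_tail q c h n hkn)

noncomputable def hfun (μ p : ℝ) (k : ℕ) : ℝ := Lprob μ p k + k * Rprob μ p k - μ

lemma hfun_eq (μ p : ℝ) (k : ℕ) (hk : 1 ≤ k) :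
    hfun μ p k = k * ((μ + p - μ*p) + (1-μ) * psi (1 - μ*p) ((1-μ)*p) k) := by
  have hk0 : ((k:ℝ)) ≠ 0 := Nat.cast_ne_zero.mpr (by omega)
  unfold hfun Lprob Rprob psi
  field_simp
  ring

lemma mem_le_sum {l : List ℕ} {k : ℕ} (h : k ∈ l) : k ≤ l.sum := by
  induction l with
  | nil => simp at h
  | cons a t ih =>
    rcases List.mem_cons.mp h with rfl | h'
    · simp [List.sum_cons]
    · have := ih h'; simp only [List.sum_cons]; omega

lemma list_sum_ge (g : ℕ → ℝ) (m : ℝ) :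
    ∀ ks : List ℕ, (∀ k ∈ ks, (k:ℝ) * m ≤ g k) →
      ((ks.sum : ℕ) : ℝ) * m ≤ (ks.map g).sum := by
  intro ks
  induction ks with
  | nil => simp
  | cons k t ih =>
    intro hyp
    have h1 := hyp k List.mem_cons_self
    have h2 := ih fun x hx => hyp x (List.mem_cons_of_mem _ hx)
    simp only [List.map_cons, List.sum_cons, List.sum_cons]
    push_cast
    push_cast at h2
    linarith [h1, h2]

lemma list_map_shift (μ p : ℝ) (ks : List ℕ) :
    (ks.map (fun k => Lprob μ p k + (k : ℝ) * Rprob μ p k)).sum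
      = (ks.map (hfun μ p)).sum + ks.length * μ := by
  induction ks with
  | nil => simp
  | cons k t ih =>
    simp only [List.map_cons, List.sum_cons, List.length_cons, ih]
    unfold hfun
    push_cast
    ring

lemma sum_hfun_ge (μ p : ℝ) (hμ0 : 0 ≤ μ) (hμ1 : μ ≤ 1) (hp0 : 0 ≤ p) (hp1 : p ≤ 1)
    (n : ℕ) (hn : 1 ≤ n) (ks : List ℕ)
    (hpos : ∀ k ∈ ks, 1 ≤ k) (hsum : ks.sum = n) :
    min ((n:ℝ) * hfun μ p 1) (hfun μ p n) ≤ (ks.map (hfun μ p)).sum := by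
  have hq0 : 0 ≤ 1 - μ*p := by nlinarith
  have hq1 : 1 - μ*p ≤ 1 := by nlinarith
  have hc0 : 0 ≤ (1-μ)*p := by nlinarith
  have ha0 : 0 ≤ 1-μ := by linarith
  have e1 : hfun μ p 1
      = (μ + p - μ*p) + (1-μ) * psi (1 - μ*p) ((1-μ)*p) 1 := by
    rw [hfun_eq μ p 1 le_rfl]; push_cast; ring
  have en : hfun μ p n
      = (n:ℝ) * ((μ + p - μ*p) + (1-μ) * psi (1 - μ*p) ((1-μ)*p) n) :=
    hfun_eq μ p n hn
  set x1 : ℝ := (μ + p - μ*p) + (1-μ) * psi (1 - μ*p) ((1-μ)*p) 1 with hx1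
  set xn : ℝ := (μ + p - μ*p) + (1-μ) * psi (1 - μ*p) ((1-μ)*p) n with hxn
  have point : ∀ k ∈ ks, (k:ℝ) * min x1 xn ≤ hfun μ p k := by
    intro k hk
    have hk1 : 1 ≤ k := hpos k hk
    have hkn : k ≤ n := by rw [← hsum]; exact mem_le_sum hk
    have hmin := psi_min_le (1-μ*p) ((1-μ)*p) hq0 hq1 hc0 n k hk1 hkn
    have hle : min x1 xn ≤ (μ + p - μ*p) + (1-μ) * psi (1 - μ*p) ((1-μ)*p) k := by
      rcases le_total (psi (1-μ*p) ((1-μ)*p) 1) (psi (1-μ*p) ((1-μ)*p) n) with hh | hh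
      · rw [min_eq_left hh] at hmin
        have := mul_le_mul_of_nonneg_left hmin ha0
        calc min x1 xn ≤ x1 := min_le_left _ _
          _ ≤ _ := by rw [hx1]; linarith
      · rw [min_eq_right hh] at hmin
        have := mul_le_mul_of_nonneg_left hmin ha0
        calc min x1 xn ≤ xn := min_le_right _ _
          _ ≤ _ := by rw [hxn]; linarith
    calc (k:ℝ) * min x1 xn ≤ (k:ℝ) * ((μ + p - μ*p) + (1-μ) * psi (1 - μ*p) ((1-μ)*p) k) :=
          mul_le_mul_of_nonneg_left hle (by positivity)
      _ = hfun μ p k := (hfun_eq μ p k hk1).symm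
  have hsumge := list_sum_ge (hfun μ p) (min x1 xn) ks point
  rw [hsum] at hsumge
  have hminEq : min ((n:ℝ) * hfun μ p 1) (hfun μ p n) = (n:ℝ) * min x1 xn := by
    rw [e1, en]
    have hn0 : (0:ℝ) ≤ n := by positivity
    rcases le_total x1 xn with hh | hh
    · rw [min_eq_left hh, min_eq_left (mul_le_mul_of_nonneg_left hh hn0)]
    · rw [min_eq_right hh, min_eq_right (mul_le_mul_of_nonneg_left hh hn0)]
  rw [hminEq]
  exact hsumge


lemma infectedFraction_eq (μ p : ℝ) (n : ℕ) (ks : List ℕ) :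
    infectedFraction μ p n ks = ((ks.map (hfun μ p)).sum + (n:ℝ) * μ) / (2 * n) := by
  unfold infectedFraction
  rw [list_map_shift]
  have hL0 : Lprob μ p 0 = μ := by unfold Lprob; simp
  rw [hL0]
  congr 1
  ring

/-- Among all 1-half-regular balanced bipartite graphs on `2n` vertices
(equivalently, all lists of positive star sizes summing to `n`), the expected
infected fraction in the `(μ,p)` model is minimized either by the perfect
matching (`n` stars of size 1) or by an `n`-star with `n-1` isolated vertices. -/
theorem matching_or_star_optimal (μ p : ℝ) (hμ0 : 0 ≤ μ) (hμ1 : μ ≤ 1)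
    (hp0 : 0 ≤ p) (hp1 : p ≤ 1) (n : ℕ) (hn : 1 ≤ n)
    (ks : List ℕ) (hpos : ∀ k ∈ ks, 1 ≤ k) (hsum : ks.sum = n) :
    min (infectedFraction μ p n (List.replicate n 1))
        (infectedFraction μ p n [n]) ≤ infectedFraction μ p n ks := by
  have hn0 : (0:ℝ) < n := by exact_mod_cast Nat.lt_of_lt_of_le Nat.zero_lt_one hn
  have h2n : (0:ℝ) < 2 * n := by linarith
  rw [infectedFraction_eq, infectedFraction_eq, infectedFraction_eq]
  have hrep : ((List.replicate n 1).map (hfun μ p)).sum = (n:ℝ) * hfun μ p 1 := by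
    rw [List.map_replicate, List.sum_replicate, nsmul_eq_mul]
  have hsingle : (([n]).map (hfun μ p)).sum = hfun μ p n := by simp
  rw [hrep, hsingle, min_div_div_right (le_of_lt h2n)]
  rw [div_le_div_iff₀ h2n h2n]
  have h := sum_hfun_ge μ p hμ0 hμ1 hp0 hp1 n hn ks hpos hsum
  have hminEq : min ((n:ℝ) * hfun μ p 1 + (n:ℝ)*μ) (hfun μ p n + (n:ℝ)*μ)
      = min ((n:ℝ) * hfun μ p 1) (hfun μ p n) + (n:ℝ)*μ := by
    rcases le_total ((n:ℝ) * hfun μ p 1) (hfun μ p n) with hh | hh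
    · rw [min_eq_left hh, min_eq_left (by linarith)]
    · rw [min_eq_right hh, min_eq_right (by linarith)]
  rw [hminEq]
  nlinarith [h, h2n]
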